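/- The pair (Z, L) = (X† X, 0) is an optimal solution simultaneously to the original LatLRR problem (minimize rank(Z) + rank(L) subject to X = X Z + L X) and to the heuristic LatLRR problem (minimize ‖Z‖_* + ‖L‖_* subject to X = X Z + L X); moreover X† X is the unique optimal solution of the heuristic LRR problem (minimize ‖Z‖_* subject to X = X Z). Hence the solution set of LatLRR contains that of LRR in both the rank and nuclear norm formulations. -/

import Mathlib

open Matrix

/-- The nuclear norm of a real matrix: the sum of its singular values,
i.e. the sum of the square roots of the eigenvalues of `Aᵀ * A`. -/
noncomputable def nuclearNorm {m n : Type*} [Fintype m] [Fintype n] [DecidableEq n]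
    (A : Matrix m n ℝ) : ℝ :=
  ∑ i, Real.sqrt (((by simpa using Matrix.isHermitian_conjTranspose_mul_self A :
    (Aᵀ * A).IsHermitian)).eigenvalues i)

/-- `P` is the Moore–Penrose pseudo-inverse of `X`. -/
def IsMoorePenroseInv {m n : Type*} [Fintype m] [Fintype n]
    (X : Matrix m n ℝ) (P : Matrix n m ℝ) : Prop :=
  X * P * X = X ∧ P * X * P = P ∧ (X * P)ᵀ = X * P ∧ (P * X)ᵀ = P * X

/-- `(U, σ, V)` is a skinny SVD of `X`: `U` and `V` have orthonormal columns,
`σ` lists the (positive) nonzero singular values, `X = U * diagonal σ * Vᵀ`,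
and the number of columns of `U` and `V` is `rank X`. -/
def IsSkinnySVD {m n r : ℕ} (X : Matrix (Fin m) (Fin n) ℝ)
    (U : Matrix (Fin m) (Fin r) ℝ) (σ : Fin r → ℝ) (V : Matrix (Fin n) (Fin r) ℝ) : Prop :=
  Uᵀ * U = 1 ∧ Vᵀ * V = 1 ∧ (∀ i, 0 < σ i) ∧
    X = U * Matrix.diagonal σ * Vᵀ ∧ r = X.rank

private lemma spectral_facts {k : Type*} [Fintype k] [DecidableEq k] (A : Matrix k k ℝ) (hA : A.IsHermitian) :
    ∃ W : Matrix k k ℝ, Wᵀ * W = 1 ∧ W * Wᵀ = 1 ∧ A * W = W * Matrix.diagonal hA.eigenvalues := by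
  have hW2 := Matrix.mem_unitaryGroup_iff'.mp hA.eigenvectorUnitary.2
  have hW3 := Matrix.mem_unitaryGroup_iff.mp hA.eigenvectorUnitary.2
  refine ⟨(hA.eigenvectorUnitary : Matrix k k ℝ), ?_, ?_, ?_⟩
  · rwa [Matrix.star_eq_conjTranspose, Matrix.conjTranspose_eq_transpose_of_trivial] at hW2
  · rwa [Matrix.star_eq_conjTranspose, Matrix.conjTranspose_eq_transpose_of_trivial] at hW3
  · have h1 : A * (hA.eigenvectorUnitary : Matrix k k ℝ) =
        ((hA.eigenvectorUnitary : Matrix k k ℝ) * Matrix.diagonal (RCLike.ofReal ∘ hA.eigenvalues)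
          * star (hA.eigenvectorUnitary : Matrix k k ℝ)) * (hA.eigenvectorUnitary : Matrix k k ℝ) := by
      exact congrArg (· * (hA.eigenvectorUnitary : Matrix k k ℝ)) hA.spectral_theorem
    rw [h1, mul_assoc, hW2, mul_one]
    have h2 : (RCLike.ofReal ∘ hA.eigenvalues : k → ℝ) = hA.eigenvalues := by
      funext x; simp
    rw [h2]


private lemma eig_congr {k : Type*} [Fintype k] [DecidableEq k] {A B : Matrix k k ℝ}
    (h : A = B) (hA : A.IsHermitian) (hB : B.IsHermitian) : hA.eigenvalues = hB.eigenvalues := by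
  subst h; rfl


private lemma dot_self_nonneg' {k : Type*} [Fintype k] (u : k → ℝ) : 0 ≤ u ⬝ᵥ u :=
  Finset.sum_nonneg fun i _ => mul_self_nonneg _

private lemma dot_self_eq_zero' {k : Type*} [Fintype k] {u : k → ℝ} (h : u ⬝ᵥ u = 0) : u = 0 := by
  funext i
  have := Finset.sum_eq_zero_iff_of_nonneg (fun j _ => mul_self_nonneg (u j)) |>.mp h i (Finset.mem_univ i)
  simpa using mul_self_eq_zero.mp this

private lemma dot_le_sqrt' {k : Type*} [Fintype k] (u v : k → ℝ) :
    u ⬝ᵥ v ≤ Real.sqrt (u ⬝ᵥ u) * Real.sqrt (v ⬝ᵥ v) := by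
  simpa [dotProduct, pow_two] using Real.sum_mul_le_sqrt_mul_sqrt Finset.univ u v


private lemma eq_of_dot_eq {k : Type*} [Fintype k] (u p : k → ℝ) (c : ℝ) (hc : 0 ≤ c)
    (hpu : p ⬝ᵥ u = c) (huu : u ⬝ᵥ u = c * c) (hpp : p ⬝ᵥ p ≤ 1) : u = c • p := by
  have hexp : (u - c • p) ⬝ᵥ (u - c • p)
      = u ⬝ᵥ u - 2 * (c * (p ⬝ᵥ u)) + (c * c) * (p ⬝ᵥ p) := by
    simp only [sub_dotProduct, dotProduct_sub, smul_dotProduct,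
      dotProduct_smul, smul_eq_mul, dotProduct_comm u p]
    ring
  have hzero : (u - c • p) ⬝ᵥ (u - c • p) = 0 := by
    refine le_antisymm ?_ (dot_self_nonneg' _)
    rw [hexp, hpu, huu]
    nlinarith
  have := dot_self_eq_zero' hzero
  rwa [sub_eq_zero] at this


private lemma trace_proj_mul_le {k : Type*} [Fintype k] [DecidableEq k]
    (Q A : Matrix k k ℝ) (hQt : Qᵀ = Q) (hQi : Q * Q = Q) :
    (Q * A).trace ≤ nuclearNorm A ∧ ((Q * A).trace = nuclearNorm A → Q * A = A) := by
  have hH : (Aᵀ * A).IsHermitian := (by simpa using Matrix.isHermitian_conjTranspose_mul_self A)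
  obtain ⟨W, hW1, hW2, hHW⟩ := spectral_facts _ hH
  set lam := hH.eigenvalues with hlam
  have hNN : nuclearNorm A = ∑ i, Real.sqrt (lam i) := rfl
  have hcol : ∀ (M : Matrix k k ℝ) (i : k), M *ᵥ (fun j => W j i) = fun j => (M * W) j i := by
    intro M i; funext j; simp [Matrix.mulVec, Matrix.mul_apply, dotProduct]
  have hEig : ∀ i, (Aᵀ * A) *ᵥ (fun j => W j i) = lam i • (fun j => W j i) := by
    intro i
    rw [hcol, hHW]
    funext j
    simp [Matrix.mul_diagonal, mul_comm]
  have hOrth : ∀ i, (fun j => W j i) ⬝ᵥ (fun j => W j i) = 1 := by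
    intro i
    have := congrFun (congrFun hW1 i) i
    simpa [Matrix.mul_apply, dotProduct, Matrix.one_apply] using this
  have hBv : ∀ (B : Matrix k k ℝ) (u : k → ℝ), u ⬝ᵥ ((Bᵀ * B) *ᵥ u) = (B *ᵥ u) ⬝ᵥ (B *ᵥ u) := by
    intro B u
    rw [← Matrix.mulVec_mulVec, Matrix.dotProduct_mulVec, Matrix.vecMul_transpose]
  have hAw : ∀ i, (A *ᵥ fun j => W j i) ⬝ᵥ (A *ᵥ fun j => W j i) = lam i := by
    intro i
    rw [← hBv, hEig]
    simp [dotProduct_smul, hOrth i]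
  have hlamnn : ∀ i, 0 ≤ lam i := fun i => (hAw i) ▸ dot_self_nonneg' _
  have hsym : ∀ u : k → ℝ, Q *ᵥ u = u ᵥ* Q := by
    intro u
    rw [← Matrix.mulVec_transpose, hQt]
  have hQw : ∀ u : k → ℝ, (Q *ᵥ u) ⬝ᵥ (Q *ᵥ u) = u ⬝ᵥ (Q *ᵥ u) := by
    intro u
    rw [← hBv Q u, hQt, hQi]
  have hQw1 : ∀ i, (Q *ᵥ fun j => W j i) ⬝ᵥ (Q *ᵥ fun j => W j i) ≤ 1 := by
    intro i
    have h0 := hQw (fun j => W j i)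
    have h1 := dot_le_sqrt' (fun j => W j i) (Q *ᵥ fun j => W j i)
    rw [hOrth i, Real.sqrt_one, one_mul] at h1
    have h2 : Real.sqrt ((Q *ᵥ fun j => W j i) ⬝ᵥ (Q *ᵥ fun j => W j i)) ^ 2
        = (Q *ᵥ fun j => W j i) ⬝ᵥ (Q *ᵥ fun j => W j i) := Real.sq_sqrt (dot_self_nonneg' _)
    have h3 : (0:ℝ) ≤ Real.sqrt ((Q *ᵥ fun j => W j i) ⬝ᵥ (Q *ᵥ fun j => W j i)) := Real.sqrt_nonneg _
    nlinarith
  have hBound : ∀ i, (Q *ᵥ fun j => W j i) ⬝ᵥ (A *ᵥ fun j => W j i) ≤ Real.sqrt (lam i) := by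
    intro i
    have h1 := dot_le_sqrt' (Q *ᵥ fun j => W j i) (A *ᵥ fun j => W j i)
    rw [hAw i] at h1
    refine h1.trans ?_
    have h2 : Real.sqrt ((Q *ᵥ fun j => W j i) ⬝ᵥ (Q *ᵥ fun j => W j i)) ≤ 1 :=
      Real.sqrt_le_one.mpr (hQw1 i)
    nlinarith [Real.sqrt_nonneg (lam i), Real.sqrt_nonneg ((Q *ᵥ fun j => W j i) ⬝ᵥ (Q *ᵥ fun j => W j i))]
  have key : ∀ i, (fun j => W j i) ⬝ᵥ ((Q * A) *ᵥ fun j => W j i)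
      = (Q *ᵥ fun j => W j i) ⬝ᵥ (A *ᵥ fun j => W j i) := by
    intro i
    rw [← Matrix.mulVec_mulVec, Matrix.dotProduct_mulVec, ← hsym]
  have hdiag : ∀ i, (fun j => W j i) ⬝ᵥ ((Q * A) *ᵥ fun j => W j i) = (Wᵀ * ((Q * A) * W)) i i := by
    intro i
    rw [hcol]
    simp [Matrix.mul_apply, dotProduct, Matrix.transpose_apply]
  have hTr : (Q * A).trace = ∑ i, (Q *ᵥ fun j => W j i) ⬝ᵥ (A *ᵥ fun j => W j i) := by
    have h4 : (Wᵀ * ((Q * A) * W)).trace = (Q * A).trace := by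
      rw [Matrix.trace_mul_comm, mul_assoc, hW2, mul_one]
    rw [← h4]
    rw [Matrix.trace]
    refine Finset.sum_congr rfl fun i _ => ?_
    rw [Matrix.diag_apply, ← hdiag, key]
  constructor
  · rw [hTr, hNN]
    exact Finset.sum_le_sum fun i _ => hBound i
  · intro heq
    rw [hTr, hNN] at heq
    have hAll : ∀ i, (Q *ᵥ fun j => W j i) ⬝ᵥ (A *ᵥ fun j => W j i) = Real.sqrt (lam i) := by
      intro i
      have := (Finset.sum_eq_sum_iff_of_le fun i _ => hBound i).mp heq
      exact this i (Finset.mem_univ i)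
    have hpercol : ∀ i, (Q * A) *ᵥ (fun j => W j i) = A *ᵥ (fun j => W j i) := by
      intro i
      have hucp : (A *ᵥ fun j => W j i) = Real.sqrt (lam i) • (Q *ᵥ fun j => W j i) :=
        eq_of_dot_eq _ _ _ (Real.sqrt_nonneg _) (hAll i)
          (by rw [hAw i, Real.mul_self_sqrt (hlamnn i)]) (hQw1 i)
      rw [← Matrix.mulVec_mulVec, hucp, Matrix.mulVec_smul, Matrix.mulVec_mulVec, hQi]
    have hQAW : (Q * A) * W = A * W := by
      ext j i
      have h5 := congrFun (hpercol i) j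
      rw [hcol, hcol] at h5
      exact h5
    calc Q * A = (Q * A) * (W * Wᵀ) := by rw [hW2, mul_one]
      _ = A := by rw [← mul_assoc, hQAW, mul_assoc, hW2, mul_one]

private lemma nuclearNorm_proj {k : Type*} [Fintype k] [DecidableEq k]
    (Q : Matrix k k ℝ) (hQt : Qᵀ = Q) (hQi : Q * Q = Q) : nuclearNorm Q = Q.trace := by
  have hQ : Q.IsHermitian := (Matrix.conjTranspose_eq_transpose_of_trivial Q).trans hQt
  have h1 : Qᵀ * Q = Q := by rw [hQt, hQi]
  have h2 : (by simpa using Matrix.isHermitian_conjTranspose_mul_self Q : (Qᵀ * Q).IsHermitian).eigenvalues = hQ.eigenvalues :=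
    eig_congr h1 _ _
  obtain ⟨W, hW1, hW2, hQW⟩ := spectral_facts Q hQ
  have hcol : ∀ (M : Matrix k k ℝ) (i : k), M *ᵥ (fun j => W j i) = fun j => (M * W) j i := by
    intro M i; funext j; simp [Matrix.mulVec, Matrix.mul_apply, dotProduct]
  have hEig : ∀ i, Q *ᵥ (fun j => W j i) = hQ.eigenvalues i • (fun j => W j i) := by
    intro i
    rw [hcol, hQW]
    funext j
    simp [Matrix.mul_diagonal, mul_comm]
  have hOrth : ∀ i, (fun j => W j i) ⬝ᵥ (fun j => W j i) = 1 := by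
    intro i
    have := congrFun (congrFun hW1 i) i
    simpa [Matrix.mul_apply, dotProduct, Matrix.one_apply] using this
  have hwne : ∀ i, (fun j => W j i) ≠ 0 := by
    intro i h
    have := hOrth i
    rw [h] at this
    simpa using this
  have hidem : ∀ i, hQ.eigenvalues i * hQ.eigenvalues i = hQ.eigenvalues i := by
    intro i
    have e1 : Q *ᵥ (Q *ᵥ fun j => W j i) = Q *ᵥ fun j => W j i := by
      rw [Matrix.mulVec_mulVec, hQi]
    rw [hEig i, Matrix.mulVec_smul, hEig i, smul_smul] at e1
    have e2 : (hQ.eigenvalues i * hQ.eigenvalues i - hQ.eigenvalues i) • (fun j => W j i) = 0 := by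
      rw [sub_smul, e1, sub_self]
    rcases smul_eq_zero.mp e2 with h | h
    · linarith [sub_eq_zero.mp (by linarith [h] : hQ.eigenvalues i * hQ.eigenvalues i - hQ.eigenvalues i = 0)]
    · exact absurd h (hwne i)
  have hsqrt : ∀ i, Real.sqrt (hQ.eigenvalues i) = hQ.eigenvalues i := by
    intro i
    have h0 : hQ.eigenvalues i * (hQ.eigenvalues i - 1) = 0 := by linear_combination hidem i
    rcases mul_eq_zero.mp h0 with h | h
    · rw [h, Real.sqrt_zero]
    · rw [show hQ.eigenvalues i = 1 by linarith, Real.sqrt_one]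
  have hNN : nuclearNorm Q = ∑ i, Real.sqrt ((by simpa using Matrix.isHermitian_conjTranspose_mul_self Q : (Qᵀ * Q).IsHermitian).eigenvalues i) := rfl
  rw [hNN, h2]
  simp_rw [hsqrt]
  calc (∑ i, hQ.eigenvalues i) = (Matrix.diagonal hQ.eigenvalues).trace := (Matrix.trace_diagonal _).symm
    _ = ((Wᵀ * W) * Matrix.diagonal hQ.eigenvalues).trace := by rw [hW1, one_mul]
    _ = (Wᵀ * (W * Matrix.diagonal hQ.eigenvalues)).trace := by rw [mul_assoc]
    _ = ((W * Matrix.diagonal hQ.eigenvalues) * Wᵀ).trace := by rw [Matrix.trace_mul_comm]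
    _ = ((Q * W) * Wᵀ).trace := by rw [hQW]
    _ = (Q * (W * Wᵀ)).trace := by rw [mul_assoc]
    _ = Q.trace := by rw [hW2, mul_one]

private lemma rank_add_le' {a b : Type*} [Fintype a] [Fintype b] (A B : Matrix a b ℝ) :
    (A + B).rank ≤ A.rank + B.rank := by
  have hsub : LinearMap.range (A + B).mulVecLin ≤
      LinearMap.range A.mulVecLin ⊔ LinearMap.range B.mulVecLin := by
    rintro x ⟨v, rfl⟩
    have h : (A + B).mulVecLin v = A.mulVecLin v + B.mulVecLin v := by
      simp [Matrix.mulVecLin_apply, Matrix.add_mulVec]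
    rw [h]
    exact Submodule.add_mem_sup (LinearMap.mem_range_self _ v) (LinearMap.mem_range_self _ v)
  calc (A + B).rank
      ≤ Module.finrank ℝ ↥(LinearMap.range A.mulVecLin ⊔ LinearMap.range B.mulVecLin) :=
        Submodule.finrank_mono hsub
    _ ≤ A.rank + B.rank := Submodule.finrank_add_le_finrank_add_finrank _ _

/-- `(X† X, 0)` is optimal simultaneously for the original and the heuristic LatLRR
problems; `X† X` is the unique minimizer of the heuristic LRR problem; and every
optimal solution `Z` of LRR (rank or nuclear norm version) yields an optimal
solution `(Z, 0)` of the corresponding LatLRR problem. -/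
theorem stmt18 {m n : ℕ} (X : Matrix (Fin m) (Fin n) ℝ) (hX : X ≠ 0)
    (P : Matrix (Fin n) (Fin m) ℝ) (hP : IsMoorePenroseInv X P) :
    -- (X† X, 0) is optimal for the original (rank) LatLRR problem
    (X = X * (P * X) + (0 : Matrix (Fin m) (Fin m) ℝ) * X ∧
      ∀ (Z : Matrix (Fin n) (Fin n) ℝ) (L : Matrix (Fin m) (Fin m) ℝ),
        X = X * Z + L * X →
          (P * X).rank + (0 : Matrix (Fin m) (Fin m) ℝ).rank ≤ Z.rank + L.rank) ∧
    -- (X† X, 0) is optimal for the heuristic LatLRR problem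
    (∀ (Z : Matrix (Fin n) (Fin n) ℝ) (L : Matrix (Fin m) (Fin m) ℝ),
        X = X * Z + L * X →
          nuclearNorm (P * X) + nuclearNorm (0 : Matrix (Fin m) (Fin m) ℝ)
            ≤ nuclearNorm Z + nuclearNorm L) ∧
    -- X† X is the unique optimal solution of the heuristic LRR problem
    (X = X * (P * X) ∧
      ∀ Z : Matrix (Fin n) (Fin n) ℝ, X = X * Z → Z ≠ P * X →
        nuclearNorm (P * X) < nuclearNorm Z) ∧
    -- solutions of the original LRR problem give solutions of the original LatLRR problem
    (∀ Z : Matrix (Fin n) (Fin n) ℝ,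
      (X = X * Z ∧ ∀ Z' : Matrix (Fin n) (Fin n) ℝ, X = X * Z' → Z.rank ≤ Z'.rank) →
      (X = X * Z + (0 : Matrix (Fin m) (Fin m) ℝ) * X ∧
        ∀ (Z' : Matrix (Fin n) (Fin n) ℝ) (L' : Matrix (Fin m) (Fin m) ℝ),
          X = X * Z' + L' * X →
            Z.rank + (0 : Matrix (Fin m) (Fin m) ℝ).rank ≤ Z'.rank + L'.rank)) ∧
    -- solutions of the heuristic LRR problem give solutions of the heuristic LatLRR problem
    (∀ Z : Matrix (Fin n) (Fin n) ℝ,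
      (X = X * Z ∧ ∀ Z' : Matrix (Fin n) (Fin n) ℝ, X = X * Z' →
          nuclearNorm Z ≤ nuclearNorm Z') →
      (X = X * Z + (0 : Matrix (Fin m) (Fin m) ℝ) * X ∧
        ∀ (Z' : Matrix (Fin n) (Fin n) ℝ) (L' : Matrix (Fin m) (Fin m) ℝ),
          X = X * Z' + L' * X →
            nuclearNorm Z + nuclearNorm (0 : Matrix (Fin m) (Fin m) ℝ)
              ≤ nuclearNorm Z' + nuclearNorm L')) := by
  obtain ⟨h1, h2, h3, h4⟩ := hP
  have hQt : (P * X)ᵀ = P * X := h4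
  have hQi : (P * X) * (P * X) = P * X := by rw [← Matrix.mul_assoc, h2]
  have hQt2 : (X * P)ᵀ = X * P := h3
  have hQi2 : (X * P) * (X * P) = X * P := by rw [← Matrix.mul_assoc, h1]
  have hR : X * (P * X) = X := by rw [← Matrix.mul_assoc, h1]
  have hNPX : nuclearNorm (P * X) = (P * X).trace := nuclearNorm_proj _ hQt hQi
  have hN0 : nuclearNorm (0 : Matrix (Fin m) (Fin m) ℝ) = 0 := by
    rw [nuclearNorm_proj (0 : Matrix (Fin m) (Fin m) ℝ) (by simp) (by simp), Matrix.trace_zero]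
  -- rank bound for feasible pairs
  have hrank : ∀ (Z : Matrix (Fin n) (Fin n) ℝ) (L : Matrix (Fin m) (Fin m) ℝ),
      X = X * Z + L * X → X.rank ≤ Z.rank + L.rank := by
    intro Z L hZL
    calc X.rank = (X * Z + L * X).rank := by rw [← hZL]
      _ ≤ (X * Z).rank + (L * X).rank := rank_add_le' _ _
      _ ≤ Z.rank + L.rank :=
          add_le_add (Matrix.rank_mul_le_right X Z) (Matrix.rank_mul_le_left L X)
  have hPXrank : (P * X).rank ≤ X.rank := Matrix.rank_mul_le_right P X
  -- nuclear norm bound for feasible pairs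
  have hG2 : ∀ (Z : Matrix (Fin n) (Fin n) ℝ) (L : Matrix (Fin m) (Fin m) ℝ),
      X = X * Z + L * X →
        nuclearNorm (P * X) + nuclearNorm (0 : Matrix (Fin m) (Fin m) ℝ)
          ≤ nuclearNorm Z + nuclearNorm L := by
    intro Z L hZL
    have h5 : P * X = P * X * Z + P * L * X := by
      calc P * X = P * (X * Z + L * X) := by rw [← hZL]
        _ = P * X * Z + P * L * X := by rw [Matrix.mul_add, ← Matrix.mul_assoc, ← Matrix.mul_assoc]
    have htr : (P * X).trace = (P * X * Z).trace + (P * L * X).trace := by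
      nth_rewrite 1 [h5]
      rw [Matrix.trace_add]
    have t1 : (P * X * Z).trace ≤ nuclearNorm Z := (trace_proj_mul_le (P * X) Z hQt hQi).1
    have t2 : (P * L * X).trace = (X * P * L).trace := Matrix.trace_mul_cycle P L X
    have t3 : (X * P * L).trace ≤ nuclearNorm L := (trace_proj_mul_le (X * P) L hQt2 hQi2).1
    rw [hNPX, hN0, add_zero, htr, t2]
    exact add_le_add t1 t3
  refine ⟨⟨by rw [Matrix.zero_mul, add_zero, hR], ?_⟩, hG2, ⟨hR.symm, ?_⟩, ?_, ?_⟩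
  · -- rank optimality of (P*X, 0)
    intro Z L hZL
    simpa [Matrix.rank_zero] using hPXrank.trans (hrank Z L hZL)
  · -- uniqueness for heuristic LRR
    intro Z hZ hne
    have hfeas : P * X = P * X * Z := by
      calc P * X = P * (X * Z) := by rw [← hZ]
        _ = P * X * Z := by rw [← Matrix.mul_assoc]
    have htr : (P * X * Z).trace = (P * X).trace := by rw [← hfeas]
    refine lt_of_le_of_ne ?_ ?_
    · rw [hNPX, ← htr]
      exact (trace_proj_mul_le (P * X) Z hQt hQi).1
    · intro hcon
      have he : (P * X * Z).trace = nuclearNorm Z := by rw [htr, ← hNPX, hcon]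
      have heq := (trace_proj_mul_le (P * X) Z hQt hQi).2 he
      exact hne (heq.symm.trans hfeas.symm)
  · -- rank LRR solutions give LatLRR solutions
    rintro Z ⟨hZfeas, hZmin⟩
    refine ⟨by rw [Matrix.zero_mul, add_zero]; exact hZfeas, ?_⟩
    intro Z' L' h'
    have hZPX : Z.rank ≤ (P * X).rank := hZmin (P * X) hR.symm
    simpa [Matrix.rank_zero] using (hZPX.trans (hPXrank.trans (hrank Z' L' h')))
  · -- nuclear norm LRR solutions give LatLRR solutions
    rintro Z ⟨hZfeas, hZmin⟩
    refine ⟨by rw [Matrix.zero_mul, add_zero]; exact hZfeas, ?_⟩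
    intro Z' L' h'
    have h6 : nuclearNorm Z ≤ nuclearNorm (P * X) := hZmin (P * X) hR.symm
    exact (add_le_add_left h6 _).trans (hG2 Z' L' h')
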